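/- Let k be a field and V a k-vector space, and endow L(V) = End_k(V) with the finite topology. Then every smooth simple module over the ring L(V) is isomorphic, as an L(V)-module, to V itself (where V is an L(V)-module via evaluation φ·v = φ(v)). -/

import Mathlib

/-- The finite topology on `End_k(V)`: the subspace topology induced by the inclusion
`End_k(V) ⊆ (V → V)`, where `V` carries the discrete topology and `V → V` the
product topology. -/
def finiteTopology (k V : Type*) [Field k] [AddCommGroup V] [Module k V] :
    TopologicalSpace (Module.End k V) :=
  TopologicalSpace.induced (fun φ => (φ : V → V))
    (@Pi.topologicalSpace V (fun _ => V) (fun _ => ⊥))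

/-- Key step: given a nonzero `w`, a vector `v0` and a functional `ff` with `ff v0 = 1`
such that the rank-one operator `x ↦ ff x • v0` does not kill `w`, we get `W ≃ V`. -/
theorem aux_rank_one_gives_equiv (k V : Type*) [Field k] [AddCommGroup V] [Module k V]
    (W : Type*) [AddCommGroup W] [Module (Module.End k V) W]
    (hsimple : IsSimpleModule (Module.End k V) W)
    (w : W)
    (v0 : V) (ff : V →ₗ[k] k) (hf1 : ff v0 = 1)
    (hw' : ff.smulRight v0 • w ≠ 0) :
    Nonempty (W ≃ₗ[Module.End k V] V) := by
  classical
  set E : Module.End k V := ff.smulRight v0 with hE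
  set w' : W := E • w with hw'def
  have hEE : E * E = E := by
    ext x
    simp [hE, Module.End.mul_apply, map_smul, hf1, smul_smul]
  have hEw' : E • w' = w' := by
    rw [hw'def, ← mul_smul, hEE]
  have hmulsr : ∀ (ψ : Module.End k V) (v : V), ψ * ff.smulRight v = ff.smulRight (ψ v) := by
    intro ψ v; ext x; simp [Module.End.mul_apply, map_smul]
  set Φ : V →ₗ[Module.End k V] W :=
    { toFun := fun v => (ff.smulRight v) • w'
      map_add' := by
        intro x y
        have : ff.smulRight (x + y) = ff.smulRight x + ff.smulRight y := by
          ext z; simp [smul_add]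
        show ff.smulRight (x+y) • w' = ff.smulRight x • w' + ff.smulRight y • w'
        rw [this, add_smul]
      map_smul' := by
        intro ψ v
        show ff.smulRight (ψ v) • w' = ψ • (ff.smulRight v • w')
        rw [← hmulsr, mul_smul] } with hΦ
  have hΦv0 : Φ v0 = w' := by
    show (ff.smulRight v0) • w' = w'
    exact hEw'
  have hinj : Function.Injective Φ := by
    rw [← LinearMap.ker_eq_bot, eq_bot_iff]
    intro v hv
    rw [LinearMap.mem_ker] at hv
    rw [Submodule.mem_bot]
    by_contra hv0
    obtain ⟨q, hq⟩ := Submodule.exists_isCompl (Submodule.span k {v})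
    set pr := Submodule.linearProjOfIsCompl _ _ hq
    set sp := LinearEquiv.toSpanNonzeroSingleton k V v hv0 with hsp
    set ψ : Module.End k V :=
      (LinearMap.toSpanSingleton k V v0) ∘ₗ (sp.symm : Submodule.span k {v} →ₗ[k] k) ∘ₗ pr
      with hψ
    have hψv : ψ v = v0 := by
      have h1 : pr v = ⟨v, Submodule.mem_span_singleton_self v⟩ :=
        Submodule.linearProjOfIsCompl_apply_left hq ⟨v, Submodule.mem_span_singleton_self v⟩
      have h2 : sp.symm ⟨v, Submodule.mem_span_singleton_self v⟩ = 1 := by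
        rw [LinearEquiv.symm_apply_eq]
        apply Subtype.ext
        simp [hsp, LinearEquiv.toSpanNonzeroSingleton]
      simp [hψ, h1, h2, LinearMap.toSpanSingleton_apply]
    have hzero : E • w' = 0 := by
      have h0 : ψ • Φ v = 0 := by rw [hv, smul_zero]
      have h3 : ψ • Φ v = (ψ * ff.smulRight v) • w' := by
        show ψ • ((ff.smulRight v) • w') = _
        rw [mul_smul]
      rw [h3, hmulsr, hψv] at h0
      exact h0
    rw [hEw'] at hzero
    exact hw' (hw'def ▸ hzero)
  have hsurj : Function.Surjective Φ := by
    rw [← LinearMap.range_eq_top]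
    rcases eq_bot_or_eq_top (LinearMap.range Φ) with h | h
    · exfalso
      have : Φ v0 ∈ LinearMap.range Φ := ⟨v0, rfl⟩
      rw [h, Submodule.mem_bot, hΦv0] at this
      exact hw' (hw'def ▸ this)
    · exact h
  exact ⟨(LinearEquiv.ofBijective Φ ⟨hinj, hsurj⟩).symm⟩

/-- Every smooth simple module over the ring `L(V) = End_k(V)` (with the finite topology)
is isomorphic to `V` itself, where `V` is an `L(V)`-module via evaluation. -/
theorem smooth_simple_module_of_endomorphism_ring
    (k V : Type*) [Field k] [AddCommGroup V] [Module k V]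
    (W : Type*) [AddCommGroup W] [Module (Module.End k V) W]
    (hsmooth : ∀ w : W,
      @IsOpen (Module.End k V) (finiteTopology k V) {φ : Module.End k V | φ • w = 0})
    (hsimple : IsSimpleModule (Module.End k V) W) :
    Nonempty (W ≃ₗ[Module.End k V] V) := by
  classical
  have : Nontrivial W := IsSimpleModule.nontrivial (Module.End k V) W
  obtain ⟨w, hw⟩ := exists_ne (0 : W)
  -- extract a finite set from smoothness
  have hopen := hsmooth w
  letI instV : TopologicalSpace V := ⊥
  letI tPi : TopologicalSpace (V → V) := @Pi.topologicalSpace V (fun _ => V) (fun _ => ⊥)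
  rw [show finiteTopology k V
      = TopologicalSpace.induced (fun φ : Module.End k V => (φ : V → V)) tPi from rfl] at hopen
  rw [isOpen_induced_iff] at hopen
  obtain ⟨t, ht, hts⟩ := hopen
  have h0t : ((0 : Module.End k V) : V → V) ∈ t := by
    have : (0 : Module.End k V) ∈ {φ : Module.End k V | φ • w = 0} := by simp
    rw [← hts] at this; exact this
  rw [isOpen_pi_iff] at ht
  obtain ⟨I, u, hu, hsub⟩ := ht ((0 : Module.End k V) : V → V) h0t
  have key : ∀ φ : Module.End k V, (∀ x ∈ I, φ x = 0) → φ • w = 0 := by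
    intro φ hφ
    have h1 : (φ : V → V) ∈ t := by
      apply hsub
      intro x hx
      have := (hu x hx).2
      simpa [hφ x hx] using this
    have : φ ∈ {φ : Module.End k V | φ • w = 0} := by rw [← hts]; exact h1
    exact this
  -- build rank-one pieces of a projection onto span of I
  set U : Submodule k V := Submodule.span k (I : Set V) with hU
  have hfd : FiniteDimensional k U := FiniteDimensional.span_of_finite k I.finite_toSet
  obtain ⟨U', hcompl⟩ := Submodule.exists_isCompl U
  set p : V →ₗ[k] U := Submodule.linearProjOfIsCompl U U' hcompl with hp
  set b := Module.finBasis k U with hb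
  set f : Fin (Module.finrank k U) → (V →ₗ[k] k) := fun i => (b.coord i).comp p with hf
  set e : Fin (Module.finrank k U) → Module.End k V :=
    fun i => (f i).smulRight ((b i : U) : V) with he
  have hπ : ∀ x ∈ I, (∑ i, e i) x = x := by
    intro x hx
    have hxU : x ∈ U := Submodule.subset_span hx
    have hpx : p x = ⟨x, hxU⟩ := Submodule.linearProjOfIsCompl_apply_left hcompl ⟨x, hxU⟩
    have hrepr := b.sum_repr ⟨x, hxU⟩
    calc (∑ i, e i) x = ∑ i, (b.repr ⟨x, hxU⟩ i) • ((b i : U) : V) := by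
          simp [he, hf, hpx, LinearMap.sum_apply]
      _ = ((∑ i, (b.repr ⟨x, hxU⟩ i) • b i : U) : V) := by simp only [Submodule.coe_sum, Submodule.coe_smul]
      _ = x := by rw [hrepr]
  have hsum : (∑ i, e i) • w = w := by
    have h1 := key (1 - ∑ i, e i) (by intro x hx; simp [hπ x hx])
    have h2 : w - (∑ i, e i) • w = 0 := by
      rw [← h1, sub_smul, one_smul]
    rw [sub_eq_zero] at h2
    exact h2.symm
  have hex : ∃ i, e i • w ≠ 0 := by
    by_contra hc
    push_neg at hc
    apply hw
    rw [← hsum, Finset.sum_smul]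
    exact Finset.sum_eq_zero fun i _ => hc i
  obtain ⟨i, hi⟩ := hex
  -- f i (b i) = 1
  have hf1 : f i ((b i : U) : V) = 1 := by
    have h1 : p ((b i : U) : V) = b i :=
      Submodule.linearProjOfIsCompl_apply_left hcompl (b i)
    simp [hf, h1]
  exact aux_rank_one_gives_equiv k V W hsimple w ((b i : U) : V) (f i) hf1 hi
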